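/- (Barta-type theorem for the largest eigenvalue) Let Ω be a finite connected subset and f: Ω→ℝ with f(x)≠0 for all x∈Ω. Then λ_max(Ω) ≥ inf_{x∈Ω} (Δ_Ω f)(x)/f(x). -/

import Mathlib

open Finset

variable {V : Type*}

noncomputable def deg (μ : V → V → ℝ) (x : V) : ℝ := ∑ᶠ y, μ x y

noncomputable def eSum (μ : V → V → ℝ) (A B : Finset V) : ℝ :=
  ∑ x ∈ A, ∑ y ∈ B, μ x y

noncomputable def vol (μ : V → V → ℝ) (U : Finset V) : ℝ := ∑ x ∈ U, deg μ x

noncomputable def bdry (μ : V → V → ℝ) (U : Finset V) : ℝ := vol μ U - eSum μ U U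

noncomputable def cheeger (μ : V → V → ℝ) (Ω : Finset V) : ℝ :=
  sInf {r : ℝ | ∃ U : Finset V, U.Nonempty ∧ U ⊆ Ω ∧ r = bdry μ U / vol μ U}

noncomputable def dualCheeger (μ : V → V → ℝ) (Ω : Finset V) : ℝ :=
  sSup {r : ℝ | ∃ V₁ V₂ : Finset V, V₁.Nonempty ∧ V₂.Nonempty ∧ Disjoint V₁ V₂ ∧
    V₁ ⊆ Ω ∧ V₂ ⊆ Ω ∧ r = 2 * eSum μ V₁ V₂ / (vol μ V₁ + vol μ V₂)}

noncomputable def dLap (μ : V → V → ℝ) (Ω : Finset V) (f : V → ℝ) (x : V) : ℝ :=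
  f x - (1 / deg μ x) * ∑ y ∈ Ω, μ x y * f y

def IsDirEigfun (μ : V → V → ℝ) (Ω : Finset V) (lam : ℝ) (f : V → ℝ) : Prop :=
  (∃ x ∈ Ω, f x ≠ 0) ∧ (∀ x ∉ Ω, f x = 0) ∧ ∀ x ∈ Ω, dLap μ Ω f x = lam * f x

def IsDirEig (μ : V → V → ℝ) (Ω : Finset V) (lam : ℝ) : Prop :=
  ∃ f : V → ℝ, IsDirEigfun μ Ω lam f

noncomputable def lam1 (μ : V → V → ℝ) (Ω : Finset V) : ℝ :=
  sInf {l : ℝ | IsDirEig μ Ω l}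

noncomputable def lamMax (μ : V → V → ℝ) (Ω : Finset V) : ℝ :=
  sSup {l : ℝ | IsDirEig μ Ω l}

def ConnectedOn (μ : V → V → ℝ) (Ω : Finset V) : Prop :=
  ∀ x ∈ Ω, ∀ y ∈ Ω,
    Relation.ReflTransGen (fun a b => a ∈ Ω ∧ b ∈ Ω ∧ μ a b ≠ 0) x y

def BipartiteOn (μ : V → V → ℝ) (Ω : Finset V) : Prop :=
  ∃ U₁ U₂ : Finset V, Disjoint U₁ U₂ ∧ (U₁ : Set V) ∪ ↑U₂ = ↑Ω ∧
    (∀ x ∈ U₁, ∀ y ∈ U₁, μ x y = 0) ∧ (∀ x ∈ U₂, ∀ y ∈ U₂, μ x y = 0)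

theorem barta_aux (μ : V → V → ℝ) (hsymm : ∀ x y, μ x y = μ y x)
    (hdeg : ∀ x : V, 0 < deg μ x) (Ω : Finset V) (hne : Ω.Nonempty) :
    ∃ lam : ℝ, IsDirEig μ Ω lam ∧ (∀ l, IsDirEig μ Ω l → l ≤ lam) ∧
      ∀ g : V → ℝ, ∑ x ∈ Ω, deg μ x * (dLap μ Ω g x * g x) ≤
        lam * ∑ x ∈ Ω, deg μ x * (g x * g x) := by
  classical
  set s : V → ℝ := fun x => Real.sqrt (deg μ x) with hs_def
  have hs : ∀ x, 0 < s x := fun x => Real.sqrt_pos.2 (hdeg x)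
  have hss : ∀ x, s x * s x = deg μ x := fun x => Real.mul_self_sqrt (hdeg x).le
  set B : Matrix {x // x ∈ Ω} {x // x ∈ Ω} ℝ :=
    Matrix.of (fun x y => (if x = y then (1:ℝ) else 0) - μ x y / (s x * s y)) with hB_def
  have hB : B.IsHermitian := by
    ext x y
    simp only [hB_def, Matrix.conjTranspose_apply, Matrix.of_apply, starRingEnd_apply,
      star_trivial]
    rw [hsymm y x, mul_comm (s y.1) (s x.1)]
    by_cases h : x = y
    · simp [h]
    · simp [h, Ne.symm h]
  set T := Matrix.toEuclideanLin B with hT_def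
  have hTsym : T.IsSymmetric := Matrix.isHermitian_iff_isSymmetric.mp hB
  set w : (V → ℝ) → EuclideanSpace ℝ {x // x ∈ Ω} :=
    fun g => WithLp.toLp 2 (fun x => s x.1 * g x.1 : {x // x ∈ Ω} → ℝ) with hw_def
  have hTapp : ∀ (v : EuclideanSpace ℝ {x // x ∈ Ω}) (x : {x // x ∈ Ω}),
      T v x = ∑ y : {x // x ∈ Ω}, B x y * v y := fun v x => rfl
  -- split off the diagonal
  have hsplit : ∀ (v : EuclideanSpace ℝ {x // x ∈ Ω}) (x : {x // x ∈ Ω}),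
      T v x = v x - ∑ y : {x // x ∈ Ω}, μ x.1 y.1 / (s x.1 * s y.1) * v y := by
    intro v x
    rw [hTapp]
    simp only [hB_def, Matrix.of_apply, sub_mul, Finset.sum_sub_distrib]
    congr 1
    · simp [Finset.sum_ite_eq]
  -- inner product formula
  have hinner : ∀ g : V → ℝ,
      inner (𝕜 := ℝ) (T (w g)) (w g) = ∑ x ∈ Ω, deg μ x * (dLap μ Ω g x * g x) := by
    intro g
    rw [← Finset.sum_coe_sort Ω (fun x => deg μ x * (dLap μ Ω g x * g x))]
    simp only [PiLp.inner_apply, RCLike.inner_apply, starRingEnd_apply, star_trivial]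
    refine Finset.sum_congr rfl fun x _ => ?_
    rw [hsplit]
    have hsum2 : ∑ y : {x // x ∈ Ω}, μ x.1 y.1 / (s x.1 * s y.1) * (w g) y
        = (1 / s x.1) * ∑ y ∈ Ω, μ x.1 y * g y := by
      rw [← Finset.sum_coe_sort Ω (fun y => μ x.1 y * g y), Finset.mul_sum]
      refine Finset.sum_congr rfl fun y _ => ?_
      simp only [hw_def, PiLp.toLp_apply]
      have hy := (hs y.1).ne'
      have hx := (hs x.1).ne'
      field_simp
    rw [hsum2]
    simp only [hw_def, dLap, PiLp.toLp_apply]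
    rw [← hss x.1]
    have hx := (hs x.1).ne'
    field_simp
  -- norm formula
  have hnorm : ∀ g : V → ℝ, ‖w g‖^2 = ∑ x ∈ Ω, deg μ x * (g x * g x) := by
    intro g
    rw [← real_inner_self_eq_norm_sq, ← Finset.sum_coe_sort Ω (fun x => deg μ x * (g x * g x))]
    simp only [PiLp.inner_apply, RCLike.inner_apply, starRingEnd_apply, star_trivial, hw_def, PiLp.toLp_apply]
    exact Finset.sum_congr rfl fun x _ => by rw [← hss x.1]; ring
  obtain ⟨x0, hx0⟩ := hne
  haveI : Nonempty {x // x ∈ Ω} := ⟨⟨x0, hx0⟩⟩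
  haveI : Nontrivial (EuclideanSpace ℝ {x // x ∈ Ω}) := by
    refine ⟨EuclideanSpace.single ⟨x0, hx0⟩ (1:ℝ), 0, fun h => ?_⟩
    have := congrArg (fun u : EuclideanSpace ℝ {x // x ∈ Ω} => u ⟨x0, hx0⟩) h
    simp at this
  set lam : ℝ := ⨆ x : {x : EuclideanSpace ℝ {x // x ∈ Ω} // x ≠ 0},
      RCLike.re (inner (𝕜 := ℝ) (T x) (x : EuclideanSpace ℝ {x // x ∈ Ω})) /
        ‖(x : EuclideanSpace ℝ {x // x ∈ Ω})‖ ^ 2 with hlam_def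
  have hEig : Module.End.HasEigenvalue T lam := by
    have := hTsym.hasEigenvalue_iSup_of_finiteDimensional
    simpa [hlam_def, RCLike.ofReal_real_eq_id] using this
  -- Rayleigh quotients are bounded by lam
  have hquot_le : ∀ v : EuclideanSpace ℝ {x // x ∈ Ω}, v ≠ 0 →
      inner (𝕜 := ℝ) (T v) v / ‖v‖^2 ≤ lam := by
    intro v hv
    set T' := LinearMap.toContinuousLinearMap T with hT'
    have hb : BddAbove (Set.range fun x : {x : EuclideanSpace ℝ {x // x ∈ Ω} // x ≠ 0} =>
        RCLike.re (inner (𝕜 := ℝ) (T x) (x : EuclideanSpace ℝ {x // x ∈ Ω})) /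
          ‖(x : EuclideanSpace ℝ {x // x ∈ Ω})‖ ^ 2) := by
      refine ⟨‖T'‖, ?_⟩
      rintro r ⟨u, rfl⟩
      have hu : (0:ℝ) < ‖(u : EuclideanSpace ℝ {x // x ∈ Ω})‖ := norm_pos_iff.mpr u.2
      have h1 : inner (𝕜 := ℝ) (T u) (u : EuclideanSpace ℝ {x // x ∈ Ω}) ≤
          ‖T (u : EuclideanSpace ℝ {x // x ∈ Ω})‖ * ‖(u : EuclideanSpace ℝ {x // x ∈ Ω})‖ :=
        real_inner_le_norm _ _
      have h2 : ‖T (u : EuclideanSpace ℝ {x // x ∈ Ω})‖ ≤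
          ‖T'‖ * ‖(u : EuclideanSpace ℝ {x // x ∈ Ω})‖ :=
        T'.le_opNorm _
      simp only [RCLike.re_to_real]
      rw [div_le_iff₀ (by positivity)]
      calc inner (𝕜 := ℝ) (T u) (u : EuclideanSpace ℝ {x // x ∈ Ω})
          ≤ ‖T'‖ * ‖(u : EuclideanSpace ℝ {x // x ∈ Ω})‖ * ‖(u : EuclideanSpace ℝ {x // x ∈ Ω})‖ := by
            nlinarith [norm_nonneg (T (u : EuclideanSpace ℝ {x // x ∈ Ω}))]
        _ = ‖T'‖ * ‖(u : EuclideanSpace ℝ {x // x ∈ Ω})‖ ^ 2 := by ring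
    have := le_ciSup hb ⟨v, hv⟩
    simpa [hlam_def] using this
  -- the eigenvector
  obtain ⟨v, hv⟩ := hEig.exists_hasEigenvector
  have hvapp : ∀ x : {x // x ∈ Ω}, T v x = lam * v x := by
    intro x
    have h := hv.apply_eq_smul
    have := congrArg (fun u : EuclideanSpace ℝ {x // x ∈ Ω} => u x) h
    simpa using this
  set g0 : V → ℝ := fun x => if h : x ∈ Ω then v ⟨x, h⟩ / s x else 0 with hg0
  have hIs : IsDirEigfun μ Ω lam g0 := by
    refine ⟨?_, ?_, ?_⟩
    · have : ∃ a : {x // x ∈ Ω}, v a ≠ 0 := by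
        by_contra h
        push_neg at h
        exact hv.2 (WithLp.ofLp_injective 2 (funext fun a => h a))
      obtain ⟨a, ha⟩ := this
      refine ⟨a.1, a.2, ?_⟩
      simp only [hg0, dif_pos a.2, Subtype.coe_eta]
      exact div_ne_zero ha (hs a.1).ne'
    · intro x hx; simp [hg0, hx]
    · intro x hx
      have hT := hvapp ⟨x, hx⟩
      rw [hsplit] at hT
      have hsum3 : ∑ y ∈ Ω, μ x y * g0 y
          = s x * ∑ y : {x // x ∈ Ω}, μ x y.1 / (s x * s y.1) * v y := by
        rw [← Finset.sum_coe_sort Ω (fun y => μ x y * g0 y), Finset.mul_sum]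
        refine Finset.sum_congr rfl fun y _ => ?_
        simp only [hg0, dif_pos y.2, Subtype.coe_eta]
        have hy := (hs y.1).ne'
        have hsx := (hs x).ne'
        field_simp
      simp only [dLap, hg0, dif_pos hx]
      rw [hsum3]
      set S := ∑ y : {x // x ∈ Ω}, μ x y.1 / (s x * s y.1) * v y with hS
      have hST : v ⟨x, hx⟩ - S = lam * v ⟨x, hx⟩ := hT
      have hd := (hdeg x).ne'
      have hsx := (hs x).ne'
      rw [← hss x]
      have h9 : (1 / (s x * s x)) * (s x * S) = S / s x := by
        field_simp
      rw [h9, ← sub_div, hST, mul_div_assoc]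
  refine ⟨lam, ⟨g0, hIs⟩, ?_, ?_⟩
  · rintro l ⟨g, ⟨x1, hx1, hgx1⟩, hout, heq⟩
    have hwne : w g ≠ 0 := by
      intro h
      have := congrArg (fun u : EuclideanSpace ℝ {x // x ∈ Ω} => u ⟨x1, hx1⟩) h
      simp only [hw_def, PiLp.toLp_apply, PiLp.zero_apply] at this
      exact hgx1 (by
        have := mul_eq_zero.mp this
        rcases this with h' | h'
        · exact absurd h' (hs x1).ne'
        · exact h')
    have h1 : inner (𝕜 := ℝ) (T (w g)) (w g) = l * ‖w g‖^2 := by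
      rw [hinner, hnorm, Finset.mul_sum]
      refine Finset.sum_congr rfl fun x hx => ?_
      rw [heq x hx]; ring
    have h2 := hquot_le (w g) hwne
    rw [h1] at h2
    have hn : (0:ℝ) < ‖w g‖^2 := by
      have := norm_pos_iff.mpr hwne
      positivity
    calc l = l * ‖w g‖^2 / ‖w g‖^2 := by field_simp
      _ ≤ lam := h2
  · intro g
    by_cases hwg : w g = 0
    · rw [← hinner, ← hnorm, hwg]
      simp
    · have h2 := hquot_le (w g) hwg
      have hn : (0:ℝ) < ‖w g‖^2 := by
        have := norm_pos_iff.mpr hwg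
        positivity
      rw [div_le_iff₀ hn] at h2
      rw [← hinner, ← hnorm]
      exact h2

theorem stmt12 {V : Type*} [Infinite V] (μ : V → V → ℝ) (hsymm : ∀ x y, μ x y = μ y x) (hnn : ∀ x y, 0 ≤ μ x y)
    (hfin : ∀ x : V, (Function.support (μ x)).Finite) (hdeg : ∀ x : V, 0 < deg μ x)
    (hconnG : ∀ x y : V, Relation.ReflTransGen (fun a b => μ a b ≠ 0) x y)
    (Ω : Finset V) (hconn : ConnectedOn μ Ω) (hcard : 2 ≤ Ω.card) (hne : Ω.Nonempty)
    (f : V → ℝ) (hf : ∀ x ∈ Ω, f x ≠ 0) :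
    Ω.inf' hne (fun x => dLap μ Ω f x / f x) ≤ lamMax μ Ω := by
  obtain ⟨lam, hlam_eig, hlam_ub, hlam_quad⟩ := barta_aux μ hsymm hdeg Ω hne
  have hmax : lam ≤ lamMax μ Ω :=
    le_csSup ⟨lam, fun l hl => hlam_ub l hl⟩ hlam_eig
  set c := Ω.inf' hne (fun x => dLap μ Ω f x / f x) with hc
  have hq := hlam_quad f
  have hpt : ∀ x ∈ Ω, c * (deg μ x * (f x * f x)) ≤ deg μ x * (dLap μ Ω f x * f x) := by
    intro x hx
    have h1 : c ≤ dLap μ Ω f x / f x := Finset.inf'_le _ hx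
    have hf2 : 0 < f x * f x := mul_self_pos.mpr (hf x hx)
    have h3 : c * (f x * f x) ≤ dLap μ Ω f x * f x := by
      have h2 := mul_le_mul_of_nonneg_right h1 hf2.le
      calc c * (f x * f x) ≤ dLap μ Ω f x / f x * (f x * f x) := h2
        _ = dLap μ Ω f x * f x := by
            have h0 := hf x hx
            field_simp
    nlinarith [hdeg x, h3]
  have hsum : c * ∑ x ∈ Ω, deg μ x * (f x * f x) ≤ ∑ x ∈ Ω, deg μ x * (dLap μ Ω f x * f x) := by
    rw [Finset.mul_sum]
    exact Finset.sum_le_sum hpt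
  have hS : 0 < ∑ x ∈ Ω, deg μ x * (f x * f x) := by
    obtain ⟨x0, hx0⟩ := hne
    refine Finset.sum_pos' (fun x hx => ?_) ⟨x0, hx0, ?_⟩
    · exact mul_nonneg (hdeg x).le (mul_self_nonneg _)
    · exact mul_pos (hdeg x0) (mul_self_pos.mpr (hf x0 hx0))
  have hcl : c ≤ lam := by
    have := le_trans hsum hq
    exact (mul_le_mul_iff_of_pos_right hS).mp this
  linarith
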